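/- Let K be a field, G a finite group, and V a subspace of the group algebra K[G] spanned by the indicator elements of the parts of a partition C of G (an S-module). If v₁,...,vₘ are elements of V with vᵢ = Σ_{g∈G} λ_{i,g}·g, then for every function φ : K^m → K, the element Σ_{g∈G} φ(λ_{1,g},...,λ_{m,g})·g also lies in V. -/

import Mathlib

open Finset

/-- extraction lemma for S-modules. -/
theorem stmt_0 {K : Type*} [Field K] {G : Type*} [Group G] [Fintype G] [DecidableEq G]
    (V : Submodule K (MonoidAlgebra K G)) (P : Finpartition (univ : Finset G))
    (hV : V = Submodule.span K
      ((fun C : Finset G => ∑ g ∈ C, MonoidAlgebra.single g (1 : K)) '' ↑P.parts))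
    (m : ℕ) (v : Fin m → MonoidAlgebra K G) (hv : ∀ i, v i ∈ V)
    (φ : (Fin m → K) → K) :
    (∑ g : G, MonoidAlgebra.single g (φ fun i => (v i).coeff g)) ∈ V := by
  classical
  -- every element of V is constant on each part
  have hconst : ∀ w ∈ V, ∀ C ∈ P.parts, ∀ g ∈ C, ∀ h ∈ C, w.coeff g = w.coeff h := by
    intro w hw
    rw [hV] at hw
    induction hw using Submodule.span_induction with
    | mem x hx =>
      obtain ⟨C', hC', rfl⟩ := hx
      intro C hC g hg h hh
      have hval : ∀ a : G, (∑ g' ∈ C', MonoidAlgebra.single g' (1 : K)).coeff a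
          = if a ∈ C' then 1 else 0 := by
        intro a
        rw [MonoidAlgebra.coeff_sum, Finsupp.finset_sum_apply]
        simp [MonoidAlgebra.coeff_single, Finsupp.single_apply, Finset.sum_ite_eq']
      rw [hval, hval]
      by_cases hgC' : g ∈ C'
      · have : C = C' := P.eq_of_mem_parts hC hC' hg hgC'
        subst this
        simp [hg, hh]
      · have hhC' : h ∉ C' := by
          intro hhC'
          have hCC : C = C' := P.eq_of_mem_parts hC hC' hh hhC'
          exact hgC' (hCC ▸ hg)
        simp [hgC', hhC']
    | zero => intro C hC g hg h hh; rfl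
    | add x y hx hy ihx ihy =>
      intro C hC g hg h hh
      show (x + y).coeff g = (x + y).coeff h
      rw [MonoidAlgebra.coeff_add, Finsupp.add_apply, Finsupp.add_apply, ihx C hC g hg h hh, ihy C hC g hg h hh]
    | smul c x hx ihx =>
      intro C hC g hg h hh
      show (c • x).coeff g = (c • x).coeff h
      rw [MonoidAlgebra.coeff_smul_apply, MonoidAlgebra.coeff_smul_apply, ihx C hC g hg h hh]
  -- representative of each part
  set rep : Finset G → G := fun C => if h : C.Nonempty then h.choose else 1 with hrep
  have hrepmem : ∀ C ∈ P.parts, rep C ∈ C := by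
    intro C hC
    have hne : C.Nonempty := P.nonempty_of_mem_parts hC
    simp only [hrep, dif_pos hne]
    exact hne.choose_spec
  have hdisj : (↑P.parts : Set (Finset G)).PairwiseDisjoint id := P.supIndep.pairwiseDisjoint
  have hsum : (∑ g : G, MonoidAlgebra.single g (φ fun i => (v i).coeff g))
      = ∑ C ∈ P.parts, (φ fun i => (v i).coeff (rep C)) •
          ∑ g ∈ C, MonoidAlgebra.single g (1 : K) := by
    symm
    calc ∑ C ∈ P.parts, (φ fun i => (v i).coeff (rep C)) • ∑ g ∈ C, MonoidAlgebra.single g (1 : K)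
        = ∑ C ∈ P.parts, ∑ g ∈ C, MonoidAlgebra.single g (φ fun i => (v i).coeff g) := by
          refine Finset.sum_congr rfl fun C hC => ?_
          rw [Finset.smul_sum]
          refine Finset.sum_congr rfl fun g hg => ?_
          have hφ : (φ fun i => (v i).coeff g) = φ fun i => (v i).coeff (rep C) := by
            congr 1
            funext i
            exact hconst (v i) (hv i) C hC g hg (rep C) (hrepmem C hC)
          rw [hφ, MonoidAlgebra.smul_single, smul_eq_mul, mul_one]
      _ = ∑ g ∈ P.parts.biUnion id, MonoidAlgebra.single g (φ fun i => (v i).coeff g) :=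
          (Finset.sum_biUnion hdisj).symm
      _ = ∑ g : G, MonoidAlgebra.single g (φ fun i => (v i).coeff g) := by
          rw [P.biUnion_parts]
  rw [hsum, hV]
  refine Submodule.sum_mem _ fun C hC => Submodule.smul_mem _ _ ?_
  exact Submodule.subset_span ⟨C, hC, rfl⟩
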